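/- Let ρ(e) = (1/2)‖h + Ae‖² + λ‖e + θ*‖₁ + aᵀe with A a matrix of full column rank, minimized at e*. If e is an arbitrary point and q ∈ ∂ρ(e) is any subgradient, then ‖e - e*‖₂ ≤ ‖q‖₂ / σ_min(A)². -/

import Mathlib

open scoped RealInnerProductSpace

private lemma aux_small_lasso {X Y K : ℝ} (hK : 0 ≤ K)
    (h : ∀ t : ℝ, 0 < t → t ≤ 1 → Y ≤ X + t * K) : Y ≤ X := by
  refine le_of_forall_pos_le_add fun ε hε => ?_
  set t := min 1 (ε / (K + 1)) with ht
  have ht0 : 0 < t := lt_min one_pos (div_pos hε (by linarith))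
  have h1 := h t ht0 (min_le_left _ _)
  have h2 : t * K ≤ ε := by
    have h3 : t ≤ ε / (K + 1) := min_le_right _ _
    have h4 := mul_le_mul_of_nonneg_right h3 hK
    have hK1 : (0:ℝ) < K + 1 := by linarith
    calc t * K ≤ ε / (K+1) * K := h4
    _ ≤ ε := by rw [div_mul_eq_mul_div, div_le_iff₀ hK1]; nlinarith
  linarith

private lemma norm_combo_lasso {E : Type*} [NormedAddCommGroup E] [InnerProductSpace ℝ E]
    (u w : E) (t : ℝ) :
    ‖u + t • (w - u)‖^2 = ‖u‖^2 + t*(‖w‖^2 - ‖u‖^2) - t*(1-t)*‖w - u‖^2 := by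
  have h1 : ‖u + t • (w - u)‖^2 = ‖u‖^2 + 2*⟪u, t • (w-u)⟫ + ‖t • (w-u)‖^2 :=
    norm_add_sq_real u (t • (w - u))
  have h2 : ‖w‖^2 = ‖u‖^2 + 2*⟪u, w-u⟫ + ‖w-u‖^2 := by
    have := norm_add_sq_real u (w - u); simpa using this
  rw [h1, real_inner_smul_right, norm_smul, mul_pow, Real.norm_eq_abs, sq_abs]
  linear_combination (-t) * h2

set_option maxHeartbeats 1000000 in
/-- Distance to the minimizer of a LASSO-type objective
`ρ(e) = (1/2)‖h + Ae‖² + λ‖e + θ*‖₁ + aᵀe` in terms of a subgradient: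
if `q ∈ ∂ρ(e)` then `‖e - e*‖ ≤ ‖q‖ / σ_min(A)²`, where `A` has full column
rank (`σ_min(A) > 0`). -/
theorem lasso_subgradient_distance_bound
    (nn mm : ℕ) (A : Matrix (Fin nn) (Fin mm) ℝ)
    (h : EuclideanSpace ℝ (Fin nn)) (θs a : EuclideanSpace ℝ (Fin mm))
    (lam : ℝ) (hlam : 0 ≤ lam)
    (ρ : EuclideanSpace ℝ (Fin mm) → ℝ)
    (hρ : ∀ e, ρ e =
      1 / 2 * ‖h + (WithLp.equiv 2 (Fin nn → ℝ)).symm (A.mulVec e)‖ ^ 2 +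
      lam * ∑ i, |e i + θs i| + ⟪a, e⟫)
    (σmin : ℝ) (hpos : 0 < σmin)
    (hσmin : IsGLB {r : ℝ | ∃ w ∈ Metric.sphere (0 : EuclideanSpace ℝ (Fin mm)) 1,
      r = ‖(WithLp.equiv 2 (Fin nn → ℝ)).symm (A.mulVec w)‖} σmin)
    (estar : EuclideanSpace ℝ (Fin mm)) (hmin : IsMinOn ρ Set.univ estar)
    (e q : EuclideanSpace ℝ (Fin mm))
    (hq : ∀ z, ρ z ≥ ρ e + ⟪q, z - e⟫) :
    ‖e - estar‖ ≤ ‖q‖ / σmin ^ 2 := by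
  set μ := σmin ^ 2 with hμ
  have hμpos : 0 < μ := pow_pos hpos 2
  set B : EuclideanSpace ℝ (Fin mm) →ₗ[ℝ] EuclideanSpace ℝ (Fin nn) :=
    (Matrix.toEuclideanLin A : _ →ₗ[ℝ] _) with hBdef
  have hBv : ∀ v : EuclideanSpace ℝ (Fin mm),
      (WithLp.equiv 2 (Fin nn → ℝ)).symm (A.mulVec v) = B v := fun v => rfl
  -- Step A : μ ‖v‖² ≤ ‖B v‖²
  have hA : ∀ v : EuclideanSpace ℝ (Fin mm), μ * ‖v‖^2 ≤ ‖B v‖^2 := by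
    intro v
    rcases eq_or_ne v 0 with rfl | hv
    · simp
    · have hnv : 0 < ‖v‖ := norm_pos_iff.mpr hv
      have hw : (‖v‖⁻¹ • v) ∈ Metric.sphere (0 : EuclideanSpace ℝ (Fin mm)) 1 := by
        simp [norm_smul, abs_of_pos (inv_pos.mpr hnv), inv_mul_cancel₀ hnv.ne']
      have hle : σmin ≤ ‖(WithLp.equiv 2 (Fin nn → ℝ)).symm (A.mulVec (‖v‖⁻¹ • v))‖ :=
        hσmin.1 ⟨‖v‖⁻¹ • v, hw, rfl⟩
      rw [hBv, WithLp.toLp_smul, WithLp.toLp_ofLp, map_smul, norm_smul, Real.norm_eq_abs,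
        abs_of_pos (inv_pos.mpr hnv)] at hle
      have h1 : σmin * ‖v‖ ≤ ‖B v‖ := by
        have h2 := mul_le_mul_of_nonneg_right hle hnv.le
        calc σmin * ‖v‖ ≤ ‖v‖⁻¹ * ‖B v‖ * ‖v‖ := h2
        _ = ‖B v‖ := by field_simp
      calc μ * ‖v‖^2 = (σmin * ‖v‖)^2 := by rw [hμ]; ring
      _ ≤ ‖B v‖^2 := pow_le_pow_left₀ (by positivity) h1 2
  -- Step B : strong convexity
  have key : ∀ x y : EuclideanSpace ℝ (Fin mm), ∀ t : ℝ, 0 ≤ t → t ≤ 1 →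
      ρ (x + t • (y - x)) ≤ ρ x + t * (ρ y - ρ x) - μ/2 * (t*(1-t)) * ‖y - x‖^2 := by
    intro x y t ht0 ht1
    have hlin : h + B (x + t • (y - x)) = (h + B x) + t • ((h + B y) - (h + B x)) := by
      rw [map_add, map_smul, map_sub]; abel
    have hsub : (h + B y) - (h + B x) = B (y - x) := by rw [map_sub]; abel
    have hquad : ‖h + B (x + t • (y - x))‖^2
        = ‖h + B x‖^2 + t*(‖h + B y‖^2 - ‖h + B x‖^2) - t*(1-t)*‖B (y - x)‖^2 := by
      rw [hlin, norm_combo_lasso, hsub]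
    have hAB : μ * ‖y - x‖^2 ≤ ‖B (y-x)‖^2 := hA _
    have hl1 : ∑ i, |(x + t • (y - x)) i + θs i| ≤
        ∑ i, |x i + θs i| + t * (∑ i, |y i + θs i| - ∑ i, |x i + θs i|) := by
      have hpt : ∀ i, |(x + t • (y - x)) i + θs i| ≤
          (1-t) * |x i + θs i| + t * |y i + θs i| := by
        intro i
        have hxi : (x + t • (y - x)) i + θs i
            = (1-t) * (x i + θs i) + t * (y i + θs i) := by
          simp only [PiLp.add_apply, PiLp.smul_apply, PiLp.sub_apply, smul_eq_mul]
          ring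
        rw [hxi]
        calc |(1-t) * (x i + θs i) + t * (y i + θs i)|
            ≤ |(1-t) * (x i + θs i)| + |t * (y i + θs i)| := abs_add_le _ _
        _ = (1-t) * |x i + θs i| + t * |y i + θs i| := by
            rw [abs_mul, abs_mul, abs_of_nonneg (by linarith : (0:ℝ) ≤ 1-t),
              abs_of_nonneg ht0]
      calc ∑ i, |(x + t • (y - x)) i + θs i|
          ≤ ∑ i, ((1-t) * |x i + θs i| + t * |y i + θs i|) :=
            Finset.sum_le_sum (fun i _ => hpt i)
      _ = ∑ i, |x i + θs i| + t * (∑ i, |y i + θs i| - ∑ i, |x i + θs i|) := by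
            rw [Finset.sum_add_distrib, ← Finset.mul_sum, ← Finset.mul_sum]; ring
    have hinner : ⟪a, x + t • (y - x)⟫ = ⟪a, x⟫ + t * (⟪a, y⟫ - ⟪a, x⟫) := by
      rw [inner_add_right, real_inner_smul_right, inner_sub_right]
    have hl1' := mul_le_mul_of_nonneg_left hl1 hlam
    have hmul := mul_le_mul_of_nonneg_left hAB
      (mul_nonneg ht0 (by linarith) : (0:ℝ) ≤ t*(1-t))
    rw [hρ, hρ, hρ]
    simp only [hBv]
    rw [hquad, hinner]
    nlinarith [hl1', hmul]
  -- Step C : ρ estar + μ/2 ‖e - estar‖² ≤ ρ e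
  have hC : ρ estar + μ/2 * ‖e - estar‖^2 ≤ ρ e := by
    refine aux_small_lasso (K := μ/2 * ‖e - estar‖^2) (by positivity) ?_
    intro t ht0 ht1
    have hk := key estar e t ht0.le ht1
    have hm : ρ estar ≤ ρ (estar + t • (e - estar)) :=
      isMinOn_iff.mp hmin _ (Set.mem_univ _)
    have h5 : t * (μ/2 * (1-t) * ‖e - estar‖^2) ≤ t * (ρ e - ρ estar) := by
      nlinarith [hk, hm]
    have h6 : μ/2 * (1-t) * ‖e - estar‖^2 ≤ ρ e - ρ estar :=
      le_of_mul_le_mul_left (by linarith) ht0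
    nlinarith [h6]
  -- Step D : ρ e + ⟪q, estar - e⟫ + μ/2 ‖estar - e‖² ≤ ρ estar
  have hD : ρ e + ⟪q, estar - e⟫ + μ/2 * ‖estar - e‖^2 ≤ ρ estar := by
    refine aux_small_lasso (K := μ/2 * ‖estar - e‖^2) (by positivity) ?_
    intro t ht0 ht1
    have hk := key e estar t ht0.le ht1
    have hqz := hq (e + t • (estar - e))
    have hz : (e + t • (estar - e)) - e = t • (estar - e) := by abel
    rw [hz, real_inner_smul_right] at hqz
    have h5 : t * (⟪q, estar - e⟫ + μ/2 * (1-t) * ‖estar - e‖^2)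
        ≤ t * (ρ estar - ρ e) := by nlinarith [hk, hqz]
    have h6 : ⟪q, estar - e⟫ + μ/2 * (1-t) * ‖estar - e‖^2 ≤ ρ estar - ρ e :=
      le_of_mul_le_mul_left (by linarith) ht0
    nlinarith [h6]
  -- combine
  have hrev : ‖e - estar‖ = ‖estar - e‖ := norm_sub_rev _ _
  have hsum : μ * ‖estar - e‖^2 ≤ -⟪q, estar - e⟫ := by
    rw [hrev] at hC; linarith
  have hcs : -⟪q, estar - e⟫ ≤ ‖q‖ * ‖estar - e‖ := by
    have := abs_real_inner_le_norm q (estar - e)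
    have := neg_abs_le (⟪q, estar - e⟫ : ℝ)
    linarith
  rcases eq_or_lt_of_le (norm_nonneg (estar - e)) with hz | hz
  · rw [hrev, ← hz]; positivity
  · rw [hrev, le_div_iff₀ hμpos]
    have h7 : μ * ‖estar - e‖^2 ≤ ‖q‖ * ‖estar - e‖ := le_trans hsum hcs
    have h8 : μ * ‖estar - e‖ * ‖estar - e‖ ≤ ‖q‖ * ‖estar - e‖ := by
      nlinarith [h7]
    have := le_of_mul_le_mul_right h8 hz
    linarith [this]
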